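/- Let A be a C*-algebra and let a_1, a_2, a_3, … be positive elements of A with a_1 ≾ a_2 ≾ a_3 ≾ ⋯ such that the set {a_n : n} is full in A. Then there exist δ_n > 0 such that (a_1 − δ_1)₊ ≾ (a_2 − δ_2)₊ ≾ (a_3 − δ_3)₊ ≾ ⋯ and such that the set {(a_n − δ_n)₊ : n} is full in A. -/

import Mathlib

set_option maxHeartbeats 1000000


open Filter Topology

namespace Stmt19

variable {A : Type*} [NonUnitalCStarAlgebra A] [PartialOrder A] [StarOrderedRing A]

/-- `(a - δ)₊`, via the continuous functional calculus with `t ↦ max (t - δ) 0`. -/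
noncomputable def cutoff (a : A) (δ : ℝ) : A := cfcₙ (fun t : ℝ => max (t - δ) 0) a

/-- Cuntz subequivalence `a ≾ b` inside `A`: there is a sequence `(x m)` with
`‖x m⋆ * b * x m - a‖ → 0`. -/
def CuntzLe (a b : A) : Prop :=
  ∃ x : ℕ → A, Tendsto (fun m => ‖star (x m) * b * x m - a‖) atTop (nhds 0)

/-- A family `(a n)` is full in `A`: it is not contained in any proper closed two-sided
ideal. -/
def IsFullSeq (a : ℕ → A) : Prop :=
  ∀ I : TwoSidedIdeal A, IsClosed (I : Set A) → (∀ n, a n ∈ I) → ∀ z : A, z ∈ I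

/-! ### Auxiliary lemmas -/

lemma norm_conj_le (x w : A) : ‖star x * w * x‖ ≤ ‖x‖ ^ 2 * ‖w‖ := by
  calc ‖star x * w * x‖ ≤ ‖star x * w‖ * ‖x‖ := norm_mul_le _ _
    _ ≤ ‖star x‖ * ‖w‖ * ‖x‖ :=
        mul_le_mul_of_nonneg_right (norm_mul_le _ _) (norm_nonneg _)
    _ = ‖x‖ ^ 2 * ‖w‖ := by rw [norm_star]; ring

lemma cuntzLe_conj (x d : A) : CuntzLe (star x * d * x) d :=
  ⟨fun _ => x, by simpa using tendsto_const_nhds⟩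

lemma CuntzLe.trans {a b c : A} (h1 : CuntzLe a b) (h2 : CuntzLe b c) : CuntzLe a c := by
  obtain ⟨x, hx⟩ := h1
  obtain ⟨y, hy⟩ := h2
  have key : ∀ m : ℕ, ∃ k, ‖star (y k) * c * y k - b‖ < ((m : ℝ) + 1)⁻¹ / (‖x m‖ ^ 2 + 1) := by
    intro m
    have hpos : (0:ℝ) < ((m : ℝ) + 1)⁻¹ / (‖x m‖ ^ 2 + 1) := by positivity
    exact (hy.eventually_lt_const hpos).exists
  choose k hk using key
  refine ⟨fun m => y (k m) * x m, ?_⟩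
  have hbound : ∀ m, ‖star (y (k m) * x m) * c * (y (k m) * x m) - a‖
      ≤ ((m : ℝ) + 1)⁻¹ + ‖star (x m) * b * x m - a‖ := by
    intro m
    have hdecomp : star (y (k m) * x m) * c * (y (k m) * x m) - a
        = star (x m) * (star (y (k m)) * c * y (k m) - b) * x m
          + (star (x m) * b * x m - a) := by
      rw [star_mul]; noncomm_ring
    rw [hdecomp]
    refine (norm_add_le _ _).trans ?_
    gcongr
    refine (norm_conj_le _ _).trans ?_
    have h1 := (hk m).le
    calc ‖x m‖ ^ 2 * ‖star (y (k m)) * c * y (k m) - b‖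
        ≤ ‖x m‖ ^ 2 * (((m : ℝ) + 1)⁻¹ / (‖x m‖ ^ 2 + 1)) := by
          gcongr <;> exact h1
      _ = ((m : ℝ) + 1)⁻¹ * (‖x m‖ ^ 2 / (‖x m‖ ^ 2 + 1)) := by ring
      _ ≤ ((m : ℝ) + 1)⁻¹ * 1 := by
          gcongr
          rw [div_le_one (by positivity)]
          linarith
      _ = ((m : ℝ) + 1)⁻¹ := mul_one _
  refine squeeze_zero (fun m => norm_nonneg _) hbound ?_
  have h0 : Tendsto (fun m : ℕ => ((m : ℝ) + 1)⁻¹) atTop (nhds 0) := by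
    simpa [one_div] using tendsto_one_div_add_atTop_nhds_zero_nat (𝕜 := ℝ)
  simpa using h0.add hx

lemma cutoff_nonneg (a : A) (δ : ℝ) : 0 ≤ cutoff a δ :=
  cfcₙ_nonneg fun x _ => le_max_right _ _

lemma cutoff_isSelfAdjoint (a : A) (δ : ℝ) : IsSelfAdjoint (cutoff a δ) :=
  IsSelfAdjoint.of_nonneg (cutoff_nonneg a δ)

lemma continuous_cutoff_fun (δ : ℝ) : Continuous fun t : ℝ => max (t - δ) 0 :=
  (continuous_id.sub continuous_const).max continuous_const

lemma norm_cutoff_sub_le (b : A) (hb : 0 ≤ b) {δ : ℝ} (hδ : 0 ≤ δ) : ‖cutoff b δ - b‖ ≤ δ := by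
  have hb' : IsSelfAdjoint b := .of_nonneg hb
  have h1 : cfcₙ (fun t : ℝ => max (t - δ) 0 - t) b = cutoff b δ - b := by
    rw [cfcₙ_sub (fun t : ℝ => max (t - δ) 0) (fun t : ℝ => t) b
      ((continuous_cutoff_fun δ).continuousOn) (max_eq_right (by linarith))
      (continuous_id.continuousOn),
      cfcₙ_id' ℝ b]
    rfl
  rw [← h1]
  refine norm_cfcₙ_le fun t ht => ?_
  have ht0 : 0 ≤ t := quasispectrum_nonneg_of_nonneg b hb t ht
  rw [Real.norm_eq_abs, abs_le]
  rcases le_total (t - δ) 0 with h | h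
  · rw [max_eq_right h]; constructor <;> linarith
  · rw [max_eq_left h]; constructor <;> linarith

open scoped CStarAlgebra

lemma star_cfcₙ_real (f : ℝ → ℝ) (b : A) : star (cfcₙ f b) = cfcₙ f b := by
  rw [← cfcₙ_star f b]
  exact cfcₙ_congr fun t _ => star_trivial _

/-- If `0 ≤ a ≤ b`, then `a` is Cuntz subequivalent to `b`. -/
lemma cuntzLe_of_le {a b : A} (ha : 0 ≤ a) (hab : a ≤ b) : CuntzLe a b := by
  have hb : 0 ≤ b := ha.trans hab
  have hsa : IsSelfAdjoint a := .of_nonneg ha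
  have hsb : IsSelfAdjoint b := .of_nonneg hb
  refine ⟨fun m => cfcₙ (fun t : ℝ => Real.sqrt t / (|t| + ((m : ℝ) + 1)⁻¹)) b
    * cfcₙ Real.sqrt a, ?_⟩
  have key : ∀ m : ℕ,
      ‖star (cfcₙ (fun t : ℝ => Real.sqrt t / (|t| + ((m : ℝ) + 1)⁻¹)) b * cfcₙ Real.sqrt a)
        * b * (cfcₙ (fun t : ℝ => Real.sqrt t / (|t| + ((m : ℝ) + 1)⁻¹)) b
          * cfcₙ Real.sqrt a) - a‖ ≤ 3 * ((m : ℝ) + 1)⁻¹ := by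
    intro m
    set c : ℝ := ((m : ℝ) + 1)⁻¹ with hc_def
    have hc : 0 < c := by positivity
    set k : ℝ → ℝ := fun t => Real.sqrt t / (|t| + c) with hk_def
    have hk_cont : Continuous k :=
      Real.continuous_sqrt.div (continuous_abs.add continuous_const)
        (fun t => by positivity)
    have hk0 : k 0 = 0 := by simp [hk_def]
    set q : ℝ → ℝ := fun t => k t * (t * k t) with hq_def
    have hq_cont : Continuous q := hk_cont.mul (continuous_id.mul hk_cont)
    have hq0 : q 0 = 0 := by simp [hq_def, hk0]
    have hq_eq : ∀ t : ℝ, 0 ≤ t → q t = t ^ 2 / (t + c) ^ 2 := by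
      intro t ht
      have hd : t + c ≠ 0 := by positivity
      have hs : Real.sqrt t * Real.sqrt t = t := Real.mul_self_sqrt ht
      simp only [hq_def, hk_def, abs_of_nonneg ht]
      have hr : Real.sqrt t / (t + c) * (t * (Real.sqrt t / (t + c)))
          = (Real.sqrt t * Real.sqrt t) * t * ((t + c)⁻¹) ^ 2 := by ring
      rw [hr, hs, inv_pow]; ring
    have hq_nonneg : ∀ t : ℝ, 0 ≤ q t := by
      intro t
      rcases le_or_gt 0 t with ht | ht
      · rw [hq_eq t ht]; positivity
      · have : Real.sqrt t = 0 := Real.sqrt_eq_zero_of_nonpos ht.le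
        simp [hq_def, hk_def, this]
    have hq_le_one : ∀ t : ℝ, q t ≤ 1 := by
      intro t
      rcases le_or_gt 0 t with ht | ht
      · rw [hq_eq t ht, div_le_one (by positivity)]
        nlinarith
      · have : Real.sqrt t = 0 := Real.sqrt_eq_zero_of_nonpos ht.le
        simp [hq_def, hk_def, this]
    have hq_bound : ∀ t : ℝ, 0 ≤ t → t * (1 - q t) ≤ 3 * c := by
      intro t ht
      rw [hq_eq t ht]
      have h2 : (0:ℝ) < (t + c) ^ 2 := by positivity
      have h3 : t * (1 - t ^ 2 / (t + c) ^ 2) = (t * ((t + c) ^ 2 - t ^ 2)) / (t + c) ^ 2 := by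
        field_simp
      rw [h3, div_le_iff₀ h2]
      nlinarith [mul_pos hc hc, sq_nonneg t, mul_nonneg ht hc.le]
    -- the element
    set S : A := cfcₙ Real.sqrt a with hS_def
    set K : A := cfcₙ k b with hK_def
    have hstarS : star S = S := star_cfcₙ_real _ a
    have hstarK : star K = K := star_cfcₙ_real _ b
    have hKbK : K * b * K = cfcₙ q b := by
      have h1 : cfcₙ q b = K * cfcₙ (fun t : ℝ => t * k t) b :=
        cfcₙ_mul k _ b hk_cont.continuousOn hk0
          (continuous_id.mul hk_cont).continuousOn (by simp [hk0])
      have h2 : cfcₙ (fun t : ℝ => t * k t) b = b * K := by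
        have := cfcₙ_mul (fun t : ℝ => t) k b (continuous_id.continuousOn) rfl
          hk_cont.continuousOn hk0
        rw [this, cfcₙ_id' ℝ b]
      rw [h1, h2, mul_assoc]
    have hrw : star (K * S) * b * (K * S) - a = S * cfcₙ q b * S - a := by
      rw [star_mul, hstarS, hstarK, ← hKbK]
      noncomm_ring
    rw [hrw, norm_sub_rev]
    -- move to the unitization
    rw [← Unitization.norm_inr (𝕜 := ℂ) (a - S * cfcₙ q b * S)]
    have hSinr : (S : A⁺¹) = cfc Real.sqrt ((a : A⁺¹)) := by
      rw [hS_def, Unitization.real_cfcₙ_eq_cfc_inr a Real.sqrt Real.sqrt_zero]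
    have hQinr : ((cfcₙ q b : A) : A⁺¹) = cfc q ((b : A⁺¹)) := by
      rw [Unitization.real_cfcₙ_eq_cfc_inr b q hq0]
    rw [Unitization.inr_sub ℂ, Unitization.inr_mul, Unitization.inr_mul, hSinr, hQinr]
    set a' : A⁺¹ := (a : A⁺¹)
    set b' : A⁺¹ := (b : A⁺¹)
    have ha' : 0 ≤ a' := Unitization.inr_nonneg_iff.mpr ha
    have hb' : 0 ≤ b' := Unitization.inr_nonneg_iff.mpr hb
    have hab' : a' ≤ b' := (Unitization.inr_le_iff a b hsa hsb).mpr hab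
    have hspec_a : ∀ t ∈ spectrum ℝ a', 0 ≤ t := fun t ht => spectrum_nonneg_of_nonneg ha' ht
    have hspec_b : ∀ t ∈ spectrum ℝ b', 0 ≤ t := fun t ht => spectrum_nonneg_of_nonneg hb' ht
    set S' : A⁺¹ := cfc Real.sqrt a' with hS'_def
    have hSS : S' * S' = a' := by
      rw [hS'_def, ← cfc_mul Real.sqrt Real.sqrt a'
        Real.continuous_sqrt.continuousOn Real.continuous_sqrt.continuousOn]
      rw [cfc_congr (g := fun t : ℝ => t) fun t ht => Real.mul_self_sqrt (hspec_a t ht)]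
      exact cfc_id' ℝ a'
    set h : ℝ → ℝ := fun t => Real.sqrt (1 - q t) with hh_def
    have hh_cont : Continuous h := Real.continuous_sqrt.comp (continuous_const.sub hq_cont)
    set C : A⁺¹ := cfc h b' with hC_def
    have hC_nonneg : 0 ≤ C := cfc_nonneg fun t _ => Real.sqrt_nonneg _
    have hC_sa : IsSelfAdjoint C := .of_nonneg hC_nonneg
    have hS'_sa : IsSelfAdjoint S' := by
      rw [hS'_def]
      exact .of_nonneg (cfc_nonneg fun t _ => Real.sqrt_nonneg _)
    have hCC : C * C = cfc (fun t : ℝ => 1 - q t) b' := by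
      rw [hC_def, ← cfc_mul h h b' hh_cont.continuousOn hh_cont.continuousOn]
      exact cfc_congr fun t _ => Real.mul_self_sqrt (by linarith [hq_le_one t])
    have hone : cfc (fun t : ℝ => 1 - q t) b' = 1 - cfc q b' := by
      rw [cfc_sub (fun _ : ℝ => 1) q b' (continuous_const.continuousOn) hq_cont.continuousOn,
        cfc_const_one ℝ b']
    have hkey_id : a' - S' * cfc q b' * S' = S' * (C * C) * S' := by
      rw [hCC, hone]
      have : S' * (1 - cfc q b') * S' = S' * S' - S' * cfc q b' * S' := by noncomm_ring
      rw [this, hSS]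
    rw [hkey_id]
    have hw : S' * (C * C) * S' = star (C * S') * (C * S') := by
      rw [star_mul, hC_sa.star_eq, hS'_sa.star_eq]
      noncomm_ring
    rw [hw, CStarRing.norm_star_mul_self]
    have hw2 : ‖C * S'‖ * ‖C * S'‖ = ‖C * a' * C‖ := by
      rw [← CStarRing.norm_self_mul_star (x := C * S')]
      congr 1
      rw [star_mul, hC_sa.star_eq, hS'_sa.star_eq]
      calc C * S' * (S' * C) = C * (S' * S') * C := by noncomm_ring
        _ = C * a' * C := by rw [hSS]
    rw [hw2]
    have hCaC : 0 ≤ C * a' * C := conjugate_nonneg_of_nonneg ha' hC_nonneg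
    have hle : C * a' * C ≤ C * b' * C := conjugate_le_conjugate_of_nonneg hab' hC_nonneg
    refine (CStarAlgebra.norm_le_norm_of_nonneg_of_le hCaC hle).trans ?_
    have hCbC : C * b' * C = cfc (fun t : ℝ => h t * (t * h t)) b' := by
      have h1 : cfc (fun t : ℝ => h t * (t * h t)) b'
          = C * cfc (fun t : ℝ => t * h t) b' :=
        cfc_mul h _ b' hh_cont.continuousOn (continuous_id.mul hh_cont).continuousOn
      have h2 : cfc (fun t : ℝ => t * h t) b' = b' * C := by
        rw [cfc_mul (fun t : ℝ => t) h b' (continuous_id.continuousOn) hh_cont.continuousOn,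
          cfc_id' ℝ b']
      rw [h1, h2, mul_assoc]
    rw [hCbC]
    refine norm_cfc_le (by positivity) fun t ht => ?_
    have ht0 : 0 ≤ t := hspec_b t ht
    have hq1 : h t * (t * h t) = (1 - q t) * t := by
      rw [show h t * (t * h t) = (h t * h t) * t by ring,
        Real.mul_self_sqrt (by linarith [hq_le_one t])]
    rw [hq1, Real.norm_eq_abs, abs_of_nonneg (by nlinarith [hq_le_one t])]
    calc (1 - q t) * t = t * (1 - q t) := by ring
      _ ≤ 3 * c := hq_bound t ht0
  refine squeeze_zero (fun m => norm_nonneg _) key ?_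
  have h0 : Tendsto (fun m : ℕ => ((m : ℝ) + 1)⁻¹) atTop (nhds 0) := by
    simpa [one_div] using tendsto_one_div_add_atTop_nhds_zero_nat (𝕜 := ℝ)
  simpa using h0.const_mul 3

/-- Kirchberg–Rørdam type lemma: if `‖a - c‖ < ε` then `(a - ε)₊ ≾ c`. -/
lemma cuntzLe_cutoff_of_norm_lt {a c : A} (ha : 0 ≤ a) (hc : 0 ≤ c) {ε : ℝ} (hε : 0 < ε)
    (h : ‖a - c‖ < ε) : CuntzLe (cutoff a ε) c := by
  set ε' : ℝ := ‖a - c‖ with hε'_def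
  have hε'0 : 0 ≤ ε' := norm_nonneg _
  have hεε : 0 < ε - ε' := by linarith
  set g : ℝ → ℝ := fun t => Real.sqrt (max (t - ε) 0 / max (t - ε') (ε - ε')) with hg_def
  have hden_pos : ∀ t : ℝ, 0 < max (t - ε') (ε - ε') :=
    fun t => lt_of_lt_of_le hεε (le_max_right _ _)
  have hg_cont : Continuous g := by
    refine Real.continuous_sqrt.comp ?_
    exact (continuous_cutoff_fun ε).div
      ((continuous_id.sub continuous_const).max continuous_const)
      (fun t => (hden_pos t).ne')
  have hg0 : g 0 = 0 := by
    have h1 : max ((0:ℝ) - ε) 0 = 0 := max_eq_right (by linarith)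
    simp only [hg_def]
    rw [h1, zero_div, Real.sqrt_zero]
  have hkey : ∀ t : ℝ, g t * ((t - ε') * g t) = max (t - ε) 0 := by
    intro t
    rcases le_or_gt t ε with ht | ht
    · have h1 : max (t - ε) 0 = 0 := max_eq_right (by linarith)
      have h2 : g t = 0 := by simp [hg_def, h1]
      simp [h2, h1]
    · have h2 : max (t - ε') (ε - ε') = t - ε' := max_eq_left (by linarith)
      have h3 : max (t - ε) 0 = t - ε := max_eq_left (by linarith)
      have h4 : 0 < t - ε' := by linarith
      have h5 : 0 ≤ (t - ε) / (t - ε') := div_nonneg (by linarith) h4.le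
      simp only [hg_def, h2, h3]
      rw [show Real.sqrt ((t - ε) / (t - ε')) * ((t - ε') * Real.sqrt ((t - ε) / (t - ε')))
          = (Real.sqrt ((t - ε) / (t - ε')) * Real.sqrt ((t - ε) / (t - ε'))) * (t - ε') by ring,
        Real.mul_self_sqrt h5, div_mul_cancel₀ _ h4.ne']
  set e : A := cfcₙ g a with he_def
  have hse : star e = e := star_cfcₙ_real _ a
  have hece : 0 ≤ e * c * e := by
    have := star_left_conjugate_nonneg hc e
    rwa [hse] at this
  have hle : cutoff a ε ≤ e * c * e := by
    rw [← Unitization.inr_le_iff _ _ (cutoff_isSelfAdjoint a ε) (.of_nonneg hece)]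
    set a' : A⁺¹ := (a : A⁺¹)
    set c' : A⁺¹ := (c : A⁺¹)
    have ha' : 0 ≤ a' := Unitization.inr_nonneg_iff.mpr ha
    have hsa' : IsSelfAdjoint a' := .of_nonneg ha'
    set G : A⁺¹ := cfc g a' with hG_def
    have hG_sa : IsSelfAdjoint G := .of_nonneg (cfc_nonneg fun t _ => Real.sqrt_nonneg _)
    have heG : ((e : A) : A⁺¹) = G := Unitization.real_cfcₙ_eq_cfc_inr a g hg0
    have hcut_id : ((cutoff a ε : A) : A⁺¹) = G * (a' - algebraMap ℝ A⁺¹ ε') * G := by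
      have h1 : ((cutoff a ε : A) : A⁺¹) = cfc (fun t : ℝ => max (t - ε) 0) a' :=
        Unitization.real_cfcₙ_eq_cfc_inr a _ (max_eq_right (by linarith))
      have h2 : cfc (fun t : ℝ => max (t - ε) 0) a'
          = cfc (fun t : ℝ => g t * ((t - ε') * g t)) a' := by
        exact cfc_congr fun t _ => (hkey t).symm
      have h3 : cfc (fun t : ℝ => g t * ((t - ε') * g t)) a'
          = G * cfc (fun t : ℝ => (t - ε') * g t) a' :=
        cfc_mul g _ a' hg_cont.continuousOn
          (((continuous_id.sub continuous_const).mul hg_cont).continuousOn)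
      have h4 : cfc (fun t : ℝ => (t - ε') * g t) a'
          = cfc (fun t : ℝ => t - ε') a' * G :=
        cfc_mul (fun t : ℝ => t - ε') g a'
          ((continuous_id.sub continuous_const).continuousOn) hg_cont.continuousOn
      have h5 : cfc (fun t : ℝ => t - ε') a' = a' - algebraMap ℝ A⁺¹ ε' := by
        rw [cfc_sub (fun t : ℝ => t) (fun _ : ℝ => ε') a'
          (continuous_id.continuousOn) (continuous_const.continuousOn),
          cfc_id' ℝ a' hsa', cfc_const ε' a' hsa']
      rw [h1, h2, h3, h4, h5, mul_assoc]
    have hsub_le : a' - algebraMap ℝ A⁺¹ ε' ≤ c' := by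
      have hsa : IsSelfAdjoint (a' - c') := by
        have h1 : IsSelfAdjoint (a - c) := ((IsSelfAdjoint.of_nonneg ha).sub (.of_nonneg hc))
        rw [show a' - c' = ((a - c : A) : A⁺¹) from (Unitization.inr_sub ℂ a c).symm]
        exact h1.inr ℂ
      have h1 : a' - c' ≤ algebraMap ℝ A⁺¹ ‖a' - c'‖ :=
        IsSelfAdjoint.le_algebraMap_norm_self hsa
      have h2 : ‖a' - c'‖ = ε' := by
        rw [show a' - c' = ((a - c : A) : A⁺¹) from (Unitization.inr_sub ℂ a c).symm,
          Unitization.norm_inr]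
      rw [h2] at h1
      exact sub_le_comm.mp h1
    calc ((cutoff a ε : A) : A⁺¹) = G * (a' - algebraMap ℝ A⁺¹ ε') * G := hcut_id
      _ ≤ G * c' * G := hG_sa.conjugate_le_conjugate hsub_le
      _ = ((e * c * e : A) : A⁺¹) := by
          rw [Unitization.inr_mul, Unitization.inr_mul, heG]
  have h1 : CuntzLe (cutoff a ε) (e * c * e) := cuntzLe_of_le (cutoff_nonneg a ε) hle
  have h2 : CuntzLe (e * c * e) c := by
    have := cuntzLe_conj e c
    rwa [hse] at this
  exact h1.trans h2

/-- Cutoffs are antitone in `δ`, up to Cuntz subequivalence. -/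
lemma cuntzLe_cutoff_le {b : A} (hb : 0 ≤ b) {δ δ' : ℝ} (h0 : 0 ≤ δ') (h : δ' ≤ δ) :
    CuntzLe (cutoff b δ) (cutoff b δ') := by
  refine cuntzLe_of_le (cutoff_nonneg b δ) ?_
  refine cfcₙ_mono (fun t _ => max_le_max (by linarith) le_rfl)
    ((continuous_cutoff_fun δ).continuousOn) ((continuous_cutoff_fun δ').continuousOn)
    (max_eq_right (by linarith)) (max_eq_right (by linarith))

/-- Rørdam's lemma: if `p ≾ b` then for every `ε > 0` there is `δ > 0` with
`(p - ε)₊ ≾ (b - δ)₊`. -/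
lemma rordam {p b : A} (hp : 0 ≤ p) (hb : 0 ≤ b) (h : CuntzLe p b) {ε : ℝ} (hε : 0 < ε) :
    ∃ δ : ℝ, 0 < δ ∧ CuntzLe (cutoff p ε) (cutoff b δ) := by
  obtain ⟨x, hx⟩ := h
  obtain ⟨m, hm⟩ := (hx.eventually_lt_const (by positivity : (0:ℝ) < ε / 2)).exists
  set δ : ℝ := (ε / 2) / (‖x m‖ ^ 2 + 1) with hδ_def
  have hδpos : 0 < δ := by positivity
  refine ⟨δ, hδpos, ?_⟩
  set d : A := cutoff b δ with hd_def
  have hd : 0 ≤ d := cutoff_nonneg b δ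
  have hnorm : ‖p - star (x m) * d * x m‖ < ε := by
    rw [norm_sub_rev]
    have hdecomp : star (x m) * d * x m - p
        = star (x m) * (d - b) * x m + (star (x m) * b * x m - p) := by noncomm_ring
    rw [hdecomp]
    have hA : ‖star (x m) * (d - b) * x m‖ ≤ ε / 2 := by
      refine (norm_conj_le _ _).trans ?_
      calc ‖x m‖ ^ 2 * ‖d - b‖ ≤ ‖x m‖ ^ 2 * δ := by
            gcongr
            exact norm_cutoff_sub_le b hb hδpos.le
        _ = (ε / 2) * (‖x m‖ ^ 2 / (‖x m‖ ^ 2 + 1)) := by rw [hδ_def]; ring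
        _ ≤ (ε / 2) * 1 := by
            gcongr
            rw [div_le_one (by positivity)]
            linarith
        _ = ε / 2 := mul_one _
    calc ‖star (x m) * (d - b) * x m + (star (x m) * b * x m - p)‖
        ≤ ‖star (x m) * (d - b) * x m‖ + ‖star (x m) * b * x m - p‖ := norm_add_le _ _
      _ < ε := by linarith
  have hconj : 0 ≤ star (x m) * d * x m := star_left_conjugate_nonneg hd (x m)
  have h1 : CuntzLe (cutoff p ε) (star (x m) * d * x m) :=
    cuntzLe_cutoff_of_norm_lt hp hconj hε hnorm
  exact h1.trans (cuntzLe_conj (x m) d)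

/-- Membership in closed ideals descends along Cuntz subequivalence. -/
lemma mem_of_cuntzLe {I : TwoSidedIdeal A} (hI : IsClosed (I : Set A)) {u v : A}
    (h : CuntzLe u v) (hv : v ∈ I) : u ∈ I := by
  obtain ⟨x, hx⟩ := h
  have htend : Tendsto (fun m => star (x m) * v * x m) atTop (nhds u) :=
    tendsto_iff_norm_sub_tendsto_zero.mpr hx
  have hmemI : ∀ m, star (x m) * v * x m ∈ I := fun m =>
    I.mul_mem_right _ _ (I.mul_mem_left _ _ hv)
  exact hI.mem_of_tendsto htend (Eventually.of_forall hmemI)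

/-- (From the proof of Lemma 5.9.) Given positive elements `a 1 ≾ a 2 ≾ a 3 ≾ ⋯` forming
a full set in `A`, there are `δ n > 0` with
`(a 1 - δ 1)₊ ≾ (a 2 - δ 2)₊ ≾ ⋯` and with `{(a n - δ n)₊}` full in `A`. -/
theorem exists_cutoffs_full
    (a : ℕ → A) (ha : ∀ n, 0 ≤ a n)
    (hinc : ∀ n, CuntzLe (a n) (a (n + 1)))
    (hfull : IsFullSeq a) :
    ∃ δ : ℕ → ℝ, (∀ n, 0 < δ n) ∧
      (∀ n, CuntzLe (cutoff (a n) (δ n)) (cutoff (a (n + 1)) (δ (n + 1)))) ∧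
      IsFullSeq (fun n => cutoff (a n) (δ n)) := by
  -- Cuntz subequivalence along the chain
  have hchain : ∀ k m : ℕ, k < m → CuntzLe (a k) (a m) := by
    intro k m
    induction m with
    | zero => omega
    | succ m ih =>
      intro hkm
      rcases Nat.lt_succ_iff_lt_or_eq.mp hkm with h | h
      · exact (ih h).trans (hinc m)
      · subst h; exact hinc k
  -- the key inductive step
  have claim : ∀ n : ℕ, ∀ e : ℝ, 0 < e → ∃ d : ℝ, 0 < d ∧
      CuntzLe (cutoff (a n) e) (cutoff (a (n + 1)) d) ∧
      ∀ k, k < n + 1 → CuntzLe (cutoff (a k) (((n : ℝ) + 1)⁻¹)) (cutoff (a (n + 1)) d) := by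
    intro n e he
    obtain ⟨d0, hd0, hcd0⟩ := rordam (ha n) (ha (n + 1)) (hinc n) he
    have hstep : ∀ k : ℕ, ∃ d', 0 < d' ∧ (k < n + 1 →
        CuntzLe (cutoff (a k) (((n : ℝ) + 1)⁻¹)) (cutoff (a (n + 1)) d')) := by
      intro k
      by_cases hk : k < n + 1
      · obtain ⟨d', h1, h2⟩ := rordam (ha k) (ha (n + 1)) (hchain k (n + 1) hk)
          (by positivity : (0:ℝ) < ((n : ℝ) + 1)⁻¹)
        exact ⟨d', h1, fun _ => h2⟩
      · exact ⟨1, one_pos, fun h => absurd h hk⟩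
    choose d' hd'pos hd'le using hstep
    have hne : (Finset.range (n + 1)).Nonempty := Finset.nonempty_range_iff.mpr n.succ_ne_zero
    set D : ℝ := min d0 ((Finset.range (n + 1)).inf' hne d') with hD_def
    have hDpos : 0 < D := lt_min hd0 ((Finset.lt_inf'_iff hne).mpr fun k _ => hd'pos k)
    refine ⟨D, hDpos, ?_, ?_⟩
    · exact hcd0.trans (cuntzLe_cutoff_le (ha (n + 1)) hDpos.le (min_le_left _ _))
    · intro k hk
      refine (hd'le k hk).trans (cuntzLe_cutoff_le (ha (n + 1)) hDpos.le ?_)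
      exact (min_le_right _ _).trans (Finset.inf'_le _ (Finset.mem_range.mpr hk))
  -- construct δ recursively
  let Φ : ℕ → {d : ℝ // 0 < d} → {d : ℝ // 0 < d} := fun n p =>
    ⟨(claim n p.1 p.2).choose, (claim n p.1 p.2).choose_spec.1⟩
  let F : ℕ → {d : ℝ // 0 < d} := fun n => Nat.rec ⟨1, one_pos⟩ Φ n
  have hFsucc : ∀ n, F (n + 1) = Φ n (F n) := fun n => rfl
  have spec : ∀ n : ℕ,
      CuntzLe (cutoff (a n) ((F n).1)) (cutoff (a (n + 1)) ((F (n + 1)).1)) ∧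
      ∀ k, k < n + 1 →
        CuntzLe (cutoff (a k) (((n : ℝ) + 1)⁻¹)) (cutoff (a (n + 1)) ((F (n + 1)).1)) := by
    intro n
    have h := (claim n (F n).1 (F n).2).choose_spec
    exact ⟨h.2.1, h.2.2⟩
  refine ⟨fun n => (F n).1, fun n => (F n).2, fun n => (spec n).1, ?_⟩
  -- fullness
  intro I hI hmem z
  refine hfull I hI (fun n => ?_) z
  have hcut : ∀ m : ℕ, n < m + 1 → cutoff (a n) (((m : ℝ) + 1)⁻¹) ∈ I := fun m hm =>
    mem_of_cuntzLe hI ((spec m).2 n hm) (hmem (m + 1))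
  have htend : Tendsto (fun m : ℕ => cutoff (a n) (((m : ℝ) + 1)⁻¹)) atTop (nhds (a n)) := by
    rw [tendsto_iff_norm_sub_tendsto_zero]
    refine squeeze_zero (g := fun m : ℕ => ((m : ℝ) + 1)⁻¹) (fun _ => norm_nonneg _)
      (fun m => norm_cutoff_sub_le (a n) (ha n) (by positivity))
      (by simpa [one_div] using tendsto_one_div_add_atTop_nhds_zero_nat (𝕜 := ℝ))
  exact hI.mem_of_tendsto htend (eventually_atTop.mpr ⟨n, fun m hm => hcut m (by omega)⟩)

end Stmt19
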